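/- Let Y be a real-valued random variable on a probability space, K > 0, and R ∈ (1, ∞) such that E[exp(R Y)] < ∞. Define the extended moment generating function M(z) := E[exp(z Y)] for complex z with Re(z) = R. Then E[(e^Y − K)_+] = (K/π) ∫_0^∞ Re( M(iu + R) · K^{−(iu+R)} / ((iu+R)(iu+R−1)) ) du, where (a)_+ = max(a, 0) and K^{−z} = exp(−z log K). -/

import Mathlib

open MeasureTheory Real Complex Set Filter FourierTransform

section Aux
variable {K R : ℝ}

lemma cexp_integrableOn_Ioi (w : ℂ) (hw : w.re < 0) (a : ℝ) :
    IntegrableOn (fun x : ℝ => Complex.exp (w * x)) (Ioi a) := by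
  apply Integrable.mono' (exp_neg_integrableOn_Ioi a (neg_pos.2 hw))
  · exact (Complex.continuous_exp.comp
      (continuous_const.mul Complex.continuous_ofReal)).aestronglyMeasurable
  · filter_upwards with x
    simp [Complex.norm_exp, neg_mul, Complex.mul_re]

lemma cexp_integral_Ioi (w : ℂ) (hw : w.re < 0) (a : ℝ) :
    ∫ x in Ioi a, Complex.exp (w * x) = -(Complex.exp (w * a) / w) := by
  have hw0 : w ≠ 0 := fun h => by simp [h] at hw
  have hder : ∀ x ∈ Ici a, HasDerivAt (fun x : ℝ => Complex.exp (w * x) / w)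
      (Complex.exp (w * x)) x := by
    intro x _
    have h1 : HasDerivAt (fun x : ℂ => Complex.exp (w * x) / w) (Complex.exp (w * x)) (x : ℂ) := by
      have := (Complex.hasDerivAt_exp (w * x)).comp (x : ℂ)
        ((hasDerivAt_id (x : ℂ)).const_mul w)
      have h2 := this.div_const w
      simpa [mul_comm, mul_div_assoc, mul_div_cancel_left₀ _ hw0] using h2
    exact h1.comp_ofReal
  have htend : Tendsto (fun x : ℝ => Complex.exp (w * x) / w) atTop (nhds 0) := by
    rw [tendsto_zero_iff_norm_tendsto_zero]
    have : (fun x : ℝ => ‖Complex.exp (w * x) / w‖) = fun x => rexp (w.re * x) / ‖w‖ := by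
      ext x; simp [Complex.norm_exp, Complex.mul_re]
    rw [this, show (0:ℝ) = 0 / ‖w‖ by simp]
    apply Tendsto.div_const
    exact Real.tendsto_exp_atBot.comp (tendsto_id.const_mul_atTop_of_neg hw)
  have := integral_Ioi_of_hasDerivAt_of_tendsto' hder (cexp_integrableOn_Ioi w hw a) htend
  rw [this]; ring

lemma payoff_zero_of_not_mem (hK : 0 < K) {x : ℝ} (hx : x ∉ Ioi (Real.log K)) :
    max (rexp x - K) 0 = 0 := by
  simp only [mem_Ioi, not_lt] at hx
  have : rexp x ≤ K := by
    calc rexp x ≤ rexp (Real.log K) := Real.exp_le_exp.2 hx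
    _ = K := Real.exp_log hK
  exact max_eq_right (by linarith)

lemma payoff_eq_on (hK : 0 < K) (z : ℂ) : ∀ x ∈ Ioi (Real.log K),
    Complex.exp (-z * x) * ((max (rexp x - K) 0 : ℝ) : ℂ)
      = Complex.exp ((1 - z) * x) - K * Complex.exp (-z * x) := by
  intro x hx
  have hx' : K < rexp x := by
    calc K = rexp (Real.log K) := (Real.exp_log hK).symm
    _ < rexp x := Real.exp_lt_exp.2 hx
  rw [max_eq_left (by linarith)]
  push_cast
  rw [mul_sub, show (1 - z) * (x : ℂ) = -z * x + x by ring, Complex.exp_add]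
  ring

lemma payoff_integrable (hK : 0 < K) {z : ℂ} (hz : 1 < z.re) :
    Integrable (fun x : ℝ => Complex.exp (-z * x) * ((max (rexp x - K) 0 : ℝ) : ℂ)) := by
  have hio : IntegrableOn
      (fun x : ℝ => Complex.exp (-z * x) * ((max (rexp x - K) 0 : ℝ) : ℂ))
      (Ioi (Real.log K)) := by
    apply IntegrableOn.congr_fun
      (((cexp_integrableOn_Ioi (1 - z) (by simp; linarith) _).sub
        ((cexp_integrableOn_Ioi (-z) (by simp; linarith) _).const_mul (K : ℂ))))
      ?_ measurableSet_Ioi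
    intro x hx; exact (payoff_eq_on hK z x hx).symm
  apply hio.integrable_of_forall_notMem_eq_zero
  intro x hx
  rw [payoff_zero_of_not_mem hK hx]
  simp

lemma payoff_laplace (hK : 0 < K) {z : ℂ} (hz : 1 < z.re) :
    ∫ x : ℝ, Complex.exp (-z * x) * ((max (rexp x - K) 0 : ℝ) : ℂ)
      = (K : ℂ) ^ (1 - z) / (z * (z - 1)) := by
  have hz0 : z ≠ 0 := by intro h; rw [h] at hz; norm_num at hz
  have hz1 : z ≠ 1 := by intro h; rw [h] at hz; norm_num at hz
  have hK0 : (K : ℂ) ≠ 0 := by exact_mod_cast hK.ne'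
  rw [← setIntegral_eq_integral_of_forall_compl_eq_zero
    (fun x hx => by rw [payoff_zero_of_not_mem hK hx]; simp)]
  rw [setIntegral_congr_fun measurableSet_Ioi (payoff_eq_on hK z)]
  rw [integral_sub (cexp_integrableOn_Ioi (1 - z) (by simp; linarith) _)
    ((cexp_integrableOn_Ioi (-z) (by simp; linarith) _).const_mul _),
    integral_const_mul, cexp_integral_Ioi _ (by simp; linarith),
    cexp_integral_Ioi _ (by simp; linarith)]
  have e1 : Complex.exp ((1 - z) * (Real.log K : ℂ)) = (K : ℂ) ^ (1 - z) := by
    rw [Complex.cpow_def_of_ne_zero hK0, ← Complex.ofReal_log hK.le, mul_comm]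
  have e2 : (K : ℂ) * Complex.exp (-z * (Real.log K : ℂ)) = (K : ℂ) ^ (1 - z) := by
    rw [show (1 : ℂ) - z = 1 + -z by ring, Complex.cpow_add _ _ hK0,
      Complex.cpow_one, Complex.cpow_def_of_ne_zero hK0,
      ← Complex.ofReal_log hK.le,
      show -z * ((Real.log K : ℝ) : ℂ) = ((Real.log K : ℝ) : ℂ) * -z by ring]
  have e3 : (K : ℂ) * -(Complex.exp (-z * (Real.log K : ℂ)) / -z) = (K : ℂ) ^ (1 - z) / z := by
    rw [← e2]; field_simp
  rw [e1, e3]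
  have hA : (1 : ℂ) - z ≠ 0 := sub_ne_zero.2 (Ne.symm hz1)
  have hB : z - 1 ≠ 0 := sub_ne_zero.2 hz1
  field_simp
  ring

/- basic facts about `z u = u * I + R` -/
lemma z_re (R u : ℝ) : ((u : ℂ) * Complex.I + R).re = R := by simp

lemma z_ne_zero (hR : 1 < R) (u : ℝ) : (u : ℂ) * Complex.I + R ≠ 0 := by
  intro h
  have := congrArg Complex.re h
  simp at this; linarith

lemma z_sub_one_ne_zero (hR : 1 < R) (u : ℝ) : (u : ℂ) * Complex.I + R - 1 ≠ 0 := by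
  intro h
  have := congrArg Complex.re h
  simp at this; linarith

lemma abs_z_mul_z_sub_one (hR : 1 < R) (u : ℝ) :
    (R - 1) ^ 2 + u ^ 2 ≤ ‖((u : ℂ) * Complex.I + R) * ((u : ℂ) * Complex.I + R - 1)‖ := by
  rw [norm_mul]
  have h1 : ‖(u : ℂ) * Complex.I + R - 1‖ = Real.sqrt ((R - 1) ^ 2 + u ^ 2) := by
    rw [Complex.norm_def, Complex.normSq_apply]
    norm_num
    ring_nf
  have h2 : Real.sqrt ((R - 1) ^ 2 + u ^ 2) ≤ ‖(u : ℂ) * Complex.I + R‖ := by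
    rw [Complex.norm_def, Complex.normSq_apply]
    apply Real.sqrt_le_sqrt
    norm_num
    nlinarith
  calc (R - 1) ^ 2 + u ^ 2 = Real.sqrt ((R - 1) ^ 2 + u ^ 2) * Real.sqrt ((R - 1) ^ 2 + u ^ 2) := by
        rw [Real.mul_self_sqrt (by positivity)]
    _ ≤ ‖(u : ℂ) * Complex.I + R‖ * ‖(u : ℂ) * Complex.I + R - 1‖ := by
        apply mul_le_mul h2 (le_of_eq h1.symm) (Real.sqrt_nonneg _) (norm_nonneg _)

lemma integrable_inv_const_add_sq {c : ℝ} (hc : c ≠ 0) :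
    Integrable fun x : ℝ => (c ^ 2 + x ^ 2)⁻¹ := by
  have h := (integrable_inv_one_add_sq.comp_div hc).const_mul (c ^ 2)⁻¹
  apply h.congr
  filter_upwards with x
  rw [← mul_inv]
  congr 1
  field_simp

/-- bound on the "coefficient" part -/
lemma norm_coeff_le (hK : 0 < K) (hR : 1 < R) (u : ℝ) :
    ‖(K : ℂ) ^ (-((u : ℂ) * Complex.I + R)) /
        (((u : ℂ) * Complex.I + R) * ((u : ℂ) * Complex.I + R - 1))‖
      ≤ K ^ (-R) * ((R - 1) ^ 2 + u ^ 2)⁻¹ := by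
  have h0 : 0 < (R - 1) ^ 2 + u ^ 2 := by nlinarith [sq_nonneg u]
  rw [norm_div,
    Complex.norm_cpow_eq_rpow_re_of_pos hK,
    show (-((u : ℂ) * Complex.I + R)).re = -R by simp, ← div_eq_mul_inv]
  gcongr
  exact abs_z_mul_z_sub_one hR u

lemma integrable_coeff_bound (hK : 0 < K) (hR : 1 < R) :
    Integrable (fun u : ℝ => K ^ (-R) * ((R - 1) ^ 2 + u ^ 2)⁻¹) :=
  (integrable_inv_const_add_sq (by intro h; nlinarith : R - 1 ≠ 0)).const_mul _

lemma continuous_coeff (hK : 0 < K) (hR : 1 < R) :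
    Continuous (fun u : ℝ => (K : ℂ) ^ (-((u : ℂ) * Complex.I + R)) /
      (((u : ℂ) * Complex.I + R) * ((u : ℂ) * Complex.I + R - 1))) := by
  have hz : Continuous (fun u : ℝ => (u : ℂ) * Complex.I + R) :=
    (Complex.continuous_ofReal.mul continuous_const).add continuous_const
  have h1 : Continuous fun u : ℝ => (K : ℂ) ^ (-((u : ℂ) * Complex.I + R)) := by
    rw [continuous_iff_continuousAt]
    intro u
    exact hz.continuousAt.neg.const_cpow (Or.inl (by exact_mod_cast hK.ne'))
  exact h1.div (hz.mul (hz.sub continuous_const))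
    (fun u => mul_ne_zero (z_ne_zero hR u) (z_sub_one_ne_zero hR u))

end Aux

section FourierPart
variable {K R : ℝ}

noncomputable def gg (K R : ℝ) : ℝ → ℂ :=
  fun x => Complex.exp (-(R : ℂ) * x) * ((max (rexp x - K) 0 : ℝ) : ℂ)

lemma gg_continuous : Continuous (gg K R) := by
  apply Continuous.mul
  · exact Complex.continuous_exp.comp (continuous_const.mul Complex.continuous_ofReal)
  · exact Complex.continuous_ofReal.comp
      (((Real.continuous_exp.sub continuous_const).max continuous_const))

lemma gg_integrable (hK : 0 < K) (hR : 1 < R) : Integrable (gg K R) :=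
  payoff_integrable hK (by simpa using hR)

lemma fourier_gg (hK : 0 < K) (hR : 1 < R) (ξ : ℝ) :
    𝓕 (gg K R) ξ = (K : ℂ) ^ (1 - (((2 * π * ξ : ℝ) : ℂ) * Complex.I + R)) /
      ((((2 * π * ξ : ℝ) : ℂ) * Complex.I + R) * ((((2 * π * ξ : ℝ) : ℂ) * Complex.I + R) - 1)) := by
  rw [Real.fourier_real_eq_integral_exp_smul]
  rw [← payoff_laplace hK (z := ((2 * π * ξ : ℝ) : ℂ) * Complex.I + R) (by simpa using hR)]
  congr 1
  ext v
  rw [smul_eq_mul, gg, ← mul_assoc, ← Complex.exp_add]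
  congr 2
  push_cast
  ring

lemma fourier_gg_integrable (hK : 0 < K) (hR : 1 < R) :
    Integrable (𝓕 (gg K R)) := by
  have hb : Integrable (fun ξ : ℝ => K * (K ^ (-R) * ((R - 1) ^ 2 + ξ ^ 2)⁻¹)) :=
    (integrable_coeff_bound hK hR).const_mul K
  apply Integrable.mono' hb
  · -- continuity of the Fourier transform
    apply Continuous.aestronglyMeasurable
    exact VectorFourier.fourierIntegral_continuous Real.continuous_fourierChar
      (by exact continuous_inner) (gg_integrable hK hR)
  · filter_upwards with ξ
    rw [fourier_gg hK hR]
    have hK0 : (K : ℂ) ≠ 0 := by exact_mod_cast hK.ne'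
    have e2 : (K : ℂ) ^ (1 - (((2 * π * ξ : ℝ) : ℂ) * Complex.I + R))
        = K * (K : ℂ) ^ (-(((2 * π * ξ : ℝ) : ℂ) * Complex.I + R)) := by
      rw [show (1 : ℂ) - (((2 * π * ξ : ℝ) : ℂ) * Complex.I + R)
          = 1 + -(((2 * π * ξ : ℝ) : ℂ) * Complex.I + R) by ring,
        Complex.cpow_add _ _ hK0, Complex.cpow_one]
    rw [e2, mul_div_assoc]
    rw [norm_mul, Complex.norm_of_nonneg hK.le]
    apply mul_le_mul_of_nonneg_left _ hK.le
    calc ‖(K : ℂ) ^ (-(((2 * π * ξ : ℝ) : ℂ) * Complex.I + R)) /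
          ((((2 * π * ξ : ℝ) : ℂ) * Complex.I + R) * ((((2 * π * ξ : ℝ) : ℂ) * Complex.I + R) - 1))‖
        ≤ K ^ (-R) * ((R - 1) ^ 2 + (2 * π * ξ) ^ 2)⁻¹ := norm_coeff_le hK hR (2 * π * ξ)
      _ ≤ K ^ (-R) * ((R - 1) ^ 2 + ξ ^ 2)⁻¹ := by
          have hπ2 : (1 : ℝ) ≤ π ^ 2 := by nlinarith [Real.pi_gt_three]
          have h1 : ξ ^ 2 ≤ π ^ 2 * ξ ^ 2 := le_mul_of_one_le_left (sq_nonneg ξ) hπ2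
          have hB : 0 < (R - 1) ^ 2 + ξ ^ 2 := by nlinarith [sq_nonneg ξ]
          have hle : (R - 1) ^ 2 + ξ ^ 2 ≤ (R - 1) ^ 2 + (2 * π * ξ) ^ 2 := by
            nlinarith [sq_nonneg (π * ξ)]
          exact mul_le_mul_of_nonneg_left (inv_anti₀ hB hle) (Real.rpow_nonneg hK.le _)

lemma gg_inversion (hK : 0 < K) (hR : 1 < R) (y : ℝ) :
    𝓕⁻ (𝓕 (gg K R)) y = gg K R y :=
  (gg_integrable hK hR).fourierInv_fourier_eq (fourier_gg_integrable hK hR)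
    gg_continuous.continuousAt

end FourierPart

section Key
variable {K R : ℝ}

/-- the full integrand as function of `u`, for fixed `y` -/
noncomputable def FF (K R y : ℝ) : ℝ → ℂ := fun u =>
  Complex.exp (((u : ℂ) * Complex.I + R) * y) *
    ((K : ℂ) ^ (-((u : ℂ) * Complex.I + R)) /
      (((u : ℂ) * Complex.I + R) * (((u : ℂ) * Complex.I + R) - 1)))

lemma norm_cexp_z_mul (R u y : ℝ) :
    ‖Complex.exp (((u : ℂ) * Complex.I + R) * y)‖ = rexp (R * y) := by
  rw [Complex.norm_exp]
  congr 1
  simp [Complex.mul_re]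

lemma FF_integrable (hK : 0 < K) (hR : 1 < R) (y : ℝ) : Integrable (FF K R y) := by
  have hb : Integrable (fun u : ℝ => rexp (R * y) * (K ^ (-R) * ((R - 1) ^ 2 + u ^ 2)⁻¹)) :=
    ((integrable_coeff_bound hK hR).const_mul _)
  apply Integrable.mono' hb
  · apply Continuous.aestronglyMeasurable
    apply Continuous.mul
    · apply Complex.continuous_exp.comp
      exact (((Complex.continuous_ofReal.mul continuous_const).add
        continuous_const).mul continuous_const)
    · exact continuous_coeff hK hR
  · filter_upwards with u
    rw [FF, norm_mul, norm_cexp_z_mul]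
    exact mul_le_mul_of_nonneg_left (norm_coeff_le hK hR u) (Real.exp_nonneg _)

lemma FF_even (hK : 0 < K) (hR : 1 < R) (y u : ℝ) : (FF K R y (-u)).re = (FF K R y u).re := by
  have hconj : FF K R y (-u) = (starRingEnd ℂ) (FF K R y u) := by
    rw [FF, FF, map_mul, map_div₀, ← Complex.exp_conj]
    have hzc : (starRingEnd ℂ) ((((u : ℝ) : ℂ)) * Complex.I + R)
        = ((-u : ℝ) : ℂ) * Complex.I + R := by
      simp [map_add, map_mul, Complex.conj_I]
    have hKc : (starRingEnd ℂ) ((K : ℂ) ^ (-(((u : ℝ) : ℂ) * Complex.I + R)))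
        = (K : ℂ) ^ (-(((-u : ℝ) : ℂ) * Complex.I + R)) := by
      rw [show (-(((-u : ℝ) : ℂ) * Complex.I + R))
          = (starRingEnd ℂ) (-(((u : ℝ) : ℂ) * Complex.I + R)) by rw [map_neg, hzc],
        Complex.cpow_conj, Complex.conj_ofReal]
      rw [Complex.arg_ofReal_of_nonneg hK.le]
      exact Real.pi_ne_zero.symm
    have hyc : (starRingEnd ℂ) (((u : ℂ) * Complex.I + R) * y)
        = (((-u : ℝ) : ℂ) * Complex.I + R) * y := by
      rw [map_mul, hzc, Complex.conj_ofReal]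
    rw [hyc, map_mul, map_sub, map_one, hzc, hKc]
  rw [hconj, Complex.conj_re]

lemma FF_half (hK : 0 < K) (hR : 1 < R) (y : ℝ) :
    ∫ u in Ioi (0:ℝ), (FF K R y u).re = (1 / 2) * ∫ u : ℝ, (FF K R y u).re := by
  have hre : Integrable (fun u : ℝ => (FF K R y u).re) := (FF_integrable hK hR y).re
  have hsplit : ∫ u : ℝ, (FF K R y u).re
      = (∫ u in Iic (0:ℝ), (FF K R y u).re) + ∫ u in Ioi (0:ℝ), (FF K R y u).re :=
    (intervalIntegral.integral_Iic_add_Ioi hre.integrableOn hre.integrableOn).symm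
  have heq : ∫ u in Iic (0:ℝ), (FF K R y u).re = ∫ u in Ioi (0:ℝ), (FF K R y u).re := by
    calc ∫ u in Iic (0:ℝ), (FF K R y u).re
        = ∫ u in Iic (0:ℝ), (FF K R y (-u)).re := by
          apply setIntegral_congr_fun measurableSet_Iic
          intro x _
          exact (FF_even hK hR y x).symm
      _ = ∫ u in Ioi (0:ℝ), (FF K R y u).re := by
          simpa using integral_comp_neg_Iic (-(0:ℝ)) (fun u => (FF K R y u).re)
  rw [hsplit, heq]
  ring

lemma FF_total (hK : 0 < K) (hR : 1 < R) (y : ℝ) :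
    ∫ u : ℝ, FF K R y u = ((2 * π / K * max (rexp y - K) 0 : ℝ) : ℂ) := by
  have h2π : (2 * π : ℝ) ≠ 0 := by positivity
  have hK0 : (K : ℂ) ≠ 0 := by exact_mod_cast hK.ne'
  -- change of variables u = 2πξ
  have hcv := MeasureTheory.Measure.integral_comp_mul_left (fun u : ℝ => FF K R y u) (2 * π)
  have habs : |(2 * π : ℝ)⁻¹| = (2 * π)⁻¹ := abs_of_pos (by positivity)
  -- identify F(2πξ) with the Fourier inversion integrand
  have hfun : (fun ξ : ℝ => FF K R y (2 * π * ξ))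
      = fun ξ : ℝ => ((rexp (R * y) / K : ℝ) : ℂ) *
          (Complex.exp (((-2) * π * ξ * (-y) : ℝ) * Complex.I) • 𝓕 (gg K R) ξ) := by
    ext ξ
    rw [smul_eq_mul, fourier_gg hK hR, FF]
    have e2 : (K : ℂ) ^ (1 - (((2 * π * ξ : ℝ) : ℂ) * Complex.I + R))
        = K * (K : ℂ) ^ (-(((2 * π * ξ : ℝ) : ℂ) * Complex.I + R)) := by
      rw [show (1 : ℂ) - (((2 * π * ξ : ℝ) : ℂ) * Complex.I + R)
          = 1 + -(((2 * π * ξ : ℝ) : ℂ) * Complex.I + R) by ring,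
        Complex.cpow_add _ _ hK0, Complex.cpow_one]
    rw [e2]
    have e3 : Complex.exp ((((2 * π * ξ : ℝ) : ℂ) * Complex.I + R) * y)
        = ((rexp (R * y) : ℝ) : ℂ) * Complex.exp ((((-2) * π * ξ * (-y) : ℝ) : ℂ) * Complex.I) := by
      rw [Complex.ofReal_exp, ← Complex.exp_add]
      congr 1
      push_cast
      ring
    rw [e3]
    have hzz : ((2 * π * ξ : ℝ) : ℂ) * Complex.I + R ≠ 0 := z_ne_zero hR (2 * π * ξ)
    have hzz1 : ((2 * π * ξ : ℝ) : ℂ) * Complex.I + R - 1 ≠ 0 := z_sub_one_ne_zero hR (2 * π * ξ)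
    have hD0 : (((2 * π * ξ : ℝ) : ℂ) * Complex.I + R) *
        ((((2 * π * ξ : ℝ) : ℂ) * Complex.I + R) - 1) ≠ 0 := mul_ne_zero hzz hzz1
    rw [Complex.ofReal_div]
    set D := (((2 * π * ξ : ℝ) : ℂ) * Complex.I + R) *
        ((((2 * π * ξ : ℝ) : ℂ) * Complex.I + R) - 1) with hD
    set A := (K : ℂ) ^ (-(((2 * π * ξ : ℝ) : ℂ) * Complex.I + R)) with hA
    field_simp
  have hinv : ∫ ξ : ℝ, Complex.exp (((-2) * π * ξ * (-y) : ℝ) * Complex.I) • 𝓕 (gg K R) ξ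
      = gg K R y := by
    rw [← Real.fourier_real_eq_integral_exp_smul]
    rw [← Real.fourierInv_eq_fourier_neg]
    exact gg_inversion hK hR y
  have : ∫ ξ : ℝ, FF K R y (2 * π * ξ) = ((rexp (R * y) / K : ℝ) : ℂ) * gg K R y := by
    rw [hfun, integral_const_mul, hinv]
  rw [hcv, habs] at this
  have hgg : ((rexp (R * y) / K : ℝ) : ℂ) * gg K R y = ((max (rexp y - K) 0 / K : ℝ) : ℂ) := by
    rw [gg]
    push_cast
    rw [show -(R : ℂ) * y = -((R : ℂ) * y) by ring, Complex.exp_neg]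
    field_simp
  rw [hgg] at this
  have h2 : ∫ u : ℝ, FF K R y u = (2 * π : ℝ) • (((max (rexp y - K) 0 / K : ℝ)) : ℂ) := by
    rw [← this, smul_smul, show (2 * π : ℝ) * (2 * π)⁻¹ = 1 by field_simp, one_smul]
  rw [h2, real_smul]
  push_cast
  ring

lemma key_identity (hK : 0 < K) (hR : 1 < R) (y : ℝ) :
    ∫ u in Ioi (0:ℝ), (Complex.exp (((u : ℂ) * Complex.I + R) * y) *
        (K : ℂ) ^ (-((u : ℂ) * Complex.I + R)) /
        (((u : ℂ) * Complex.I + R) * (((u : ℂ) * Complex.I + R) - 1))).re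
      = π / K * max (rexp y - K) 0 := by
  have hFF : ∀ u : ℝ, Complex.exp (((u : ℂ) * Complex.I + R) * y) *
        (K : ℂ) ^ (-((u : ℂ) * Complex.I + R)) /
        (((u : ℂ) * Complex.I + R) * (((u : ℂ) * Complex.I + R) - 1)) = FF K R y u := by
    intro u; rw [FF, mul_div_assoc]
  simp_rw [hFF]
  rw [FF_half hK hR y]
  have hint2 : ∫ u : ℝ, (FF K R y u).re = (∫ u : ℝ, FF K R y u).re := by
    simpa using integral_re (FF_integrable hK hR y)
  rw [hint2, FF_total hK hR y, Complex.ofReal_re]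
  field_simp

end Key

/-- Fourier inversion formula for call option prices: if `Y` is a real random variable,
`K > 0`, and `R > 1` is such that `E[exp (R * Y)] < ∞`, then with
`M z := E[exp (z * Y)]` (the extended moment generating function on the line `Re z = R`),
`E[(e^Y - K)₊] = (K/π) ∫_0^∞ Re (M (iu+R) * K^{-(iu+R)} / ((iu+R)(iu+R-1))) du`. -/
theorem fourier_call_price
    {Ω : Type*} {mΩ : MeasurableSpace Ω} (μ : Measure Ω) [IsProbabilityMeasure μ]
    (Y : Ω → ℝ) (hY : Measurable Y) (K : ℝ) (hK : 0 < K)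
    (R : ℝ) (hR : 1 < R)
    (hint : Integrable (fun ω => rexp (R * Y ω)) μ)
    (M : ℂ → ℂ)
    (hM : ∀ z : ℂ, z.re = R → M z = ∫ ω, Complex.exp (z * (Y ω : ℂ)) ∂μ) :
    ∫ ω, max (rexp (Y ω) - K) 0 ∂μ =
      (K / π) * ∫ u in Set.Ioi (0 : ℝ),
        (M (u * Complex.I + R) * (K : ℂ) ^ (-(u * Complex.I + R))
          / ((u * Complex.I + R) * (u * Complex.I + R - 1))).re := by
  -- integrability of ω ↦ cexp(z·Y) for Re z = R
  have hYexp : ∀ u : ℝ, Integrable (fun ω => Complex.exp (((u : ℂ) * Complex.I + R) * (Y ω : ℂ))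
      * ((K : ℂ) ^ (-((u : ℂ) * Complex.I + R)) /
        (((u : ℂ) * Complex.I + R) * (((u : ℂ) * Complex.I + R) - 1)))) μ := by
    intro u
    apply Integrable.mono' (hint.const_mul (K ^ (-R) * ((R - 1) ^ 2 + u ^ 2)⁻¹))
    · apply AEStronglyMeasurable.mul_const
      apply (Complex.measurable_exp.comp ((measurable_const.mul
        (Complex.measurable_ofReal.comp hY)))).aestronglyMeasurable
    · filter_upwards with ω
      rw [norm_mul, norm_cexp_z_mul]
      calc rexp (R * Y ω) * ‖(K : ℂ) ^ (-((u : ℂ) * Complex.I + R)) /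
            (((u : ℂ) * Complex.I + R) * (((u : ℂ) * Complex.I + R) - 1))‖
          ≤ rexp (R * Y ω) * (K ^ (-R) * ((R - 1) ^ 2 + u ^ 2)⁻¹) :=
            mul_le_mul_of_nonneg_left (norm_coeff_le hK hR u) (Real.exp_nonneg _)
        _ = K ^ (-R) * ((R - 1) ^ 2 + u ^ 2)⁻¹ * rexp (R * Y ω) := by ring
  -- rewrite the integrand using hM and pull the constants into the expectation
  have step1 : ∀ u : ℝ, (M ((u : ℂ) * Complex.I + R) * (K : ℂ) ^ (-((u : ℂ) * Complex.I + R))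
          / (((u : ℂ) * Complex.I + R) * (((u : ℂ) * Complex.I + R) - 1))).re
      = ∫ ω, (Complex.exp (((u : ℂ) * Complex.I + R) * (Y ω : ℂ))
          * ((K : ℂ) ^ (-((u : ℂ) * Complex.I + R)) /
            (((u : ℂ) * Complex.I + R) * (((u : ℂ) * Complex.I + R) - 1)))).re ∂μ := by
    intro u
    rw [hM _ (z_re R u), mul_div_assoc, ← integral_mul_const]
    have h := integral_re (hYexp u)
    simpa using h.symm
  calc ∫ ω, max (rexp (Y ω) - K) 0 ∂μ
      = ∫ ω, (K / π) * (π / K * max (rexp (Y ω) - K) 0) ∂μ := by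
        congr 1; ext ω
        field_simp
    _ = (K / π) * ∫ ω, π / K * max (rexp (Y ω) - K) 0 ∂μ := integral_const_mul _ _
    _ = (K / π) * ∫ ω, (∫ u in Ioi (0:ℝ), (Complex.exp (((u : ℂ) * Complex.I + R) * (Y ω : ℂ))
          * ((K : ℂ) ^ (-((u : ℂ) * Complex.I + R)) /
            (((u : ℂ) * Complex.I + R) * (((u : ℂ) * Complex.I + R) - 1)))).re) ∂μ := by
        congr 1
        apply integral_congr_ae
        filter_upwards with ω
        rw [← key_identity hK hR (Y ω)]
        apply setIntegral_congr_fun measurableSet_Ioi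
        intro u _
        simp only [mul_div_assoc]
    _ = (K / π) * ∫ u in Ioi (0:ℝ), (∫ ω, (Complex.exp (((u : ℂ) * Complex.I + R) * (Y ω : ℂ))
          * ((K : ℂ) ^ (-((u : ℂ) * Complex.I + R)) /
            (((u : ℂ) * Complex.I + R) * (((u : ℂ) * Complex.I + R) - 1)))).re ∂μ) := by
        congr 1
        apply integral_integral_swap
        have hbound : Integrable (fun p : Ω × ℝ =>
            rexp (R * Y p.1) * (K ^ (-R) * ((R - 1) ^ 2 + p.2 ^ 2)⁻¹))
            (μ.prod (volume.restrict (Ioi 0))) :=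
          Integrable.mul_prod hint ((integrable_coeff_bound hK hR).restrict)
        apply Integrable.mono' hbound
        · apply Measurable.aestronglyMeasurable
          apply Complex.measurable_re.comp
          apply Measurable.mul
          · apply Complex.measurable_exp.comp
            apply Measurable.mul
            · exact ((Complex.measurable_ofReal.comp measurable_snd).mul_const _).add
                measurable_const
            · exact Complex.measurable_ofReal.comp (hY.comp measurable_fst)
          · exact (continuous_coeff hK hR).measurable.comp measurable_snd
        · filter_upwards with p
          rw [Function.uncurry]
          calc ‖(Complex.exp (((p.2 : ℂ) * Complex.I + R) * (Y p.1 : ℂ)) *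
                ((K : ℂ) ^ (-((p.2 : ℂ) * Complex.I + R)) /
                (((p.2 : ℂ) * Complex.I + R) * (((p.2 : ℂ) * Complex.I + R) - 1)))).re‖
              ≤ ‖Complex.exp (((p.2 : ℂ) * Complex.I + R) * (Y p.1 : ℂ)) *
                ((K : ℂ) ^ (-((p.2 : ℂ) * Complex.I + R)) /
                (((p.2 : ℂ) * Complex.I + R) * (((p.2 : ℂ) * Complex.I + R) - 1)))‖ := by
                rw [Real.norm_eq_abs]
                exact Complex.abs_re_le_norm _
            _ ≤ rexp (R * Y p.1) * (K ^ (-R) * ((R - 1) ^ 2 + p.2 ^ 2)⁻¹) := by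
                rw [norm_mul, norm_cexp_z_mul]
                exact mul_le_mul_of_nonneg_left (norm_coeff_le hK hR p.2) (Real.exp_nonneg _)
    _ = (K / π) * ∫ u in Set.Ioi (0 : ℝ),
        (M (u * Complex.I + R) * (K : ℂ) ^ (-(u * Complex.I + R))
          / ((u * Complex.I + R) * (u * Complex.I + R - 1))).re := by
        congr 1
        apply setIntegral_congr_fun measurableSet_Ioi
        intro u _
        exact (step1 u).symm
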